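/- Assume [A₀,B₀] is stabilizable, A₀ ∈ ℝ^{p×p}, B₀ ∈ ℝ^{p×r}. Then the set { L ∈ ℝ^{r×p} : A₀ + B₀L has a complex eigenvalue λ with |λ| = 1 } has Lebesgue measure zero in ℝ^{r×p}. -/

import Mathlib

open Matrix MeasureTheory

/-- A real square matrix has spectral radius less than one. -/
def SpecRadiusLtOne {p : ℕ} (D : Matrix (Fin p) (Fin p) ℝ) : Prop :=
  ∀ lam : ℂ, ((D.map (algebraMap ℝ ℂ)).charpoly).IsRoot lam → ‖lam‖ < 1

/-- The pair `[A, B]` is stabilizable. -/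
def Stabilizable {p r : ℕ} (A : Matrix (Fin p) (Fin p) ℝ) (B : Matrix (Fin p) (Fin r) ℝ) : Prop :=
  ∃ L : Matrix (Fin r) (Fin p) ℝ, SpecRadiusLtOne (A + B * L)

noncomputable section Aux

open Polynomial

variable {R S : Type*} [CommRing R] [CommRing S] {p : ℕ}

/-- The determinant of the reversed characteristic polynomial evaluated at the matrix itself. -/
def myPoly (M : Matrix (Fin p) (Fin p) R) : R :=
  (Polynomial.aeval M M.charpolyRev).det

lemma charpolyRev_map' (f : R →+* S) (M : Matrix (Fin p) (Fin p) R) :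
    M.charpolyRev.map f = (M.map f).charpolyRev := by
  unfold Matrix.charpolyRev
  rw [← Polynomial.coe_mapRingHom, RingHom.map_det]
  congr 1
  ext i j
  rcases eq_or_ne i j with h | h <;>
    simp [h, Matrix.one_apply, Matrix.sub_apply, Matrix.smul_apply, Matrix.map_apply,
      smul_eq_mul, Polynomial.map_sub, Polynomial.map_mul]

lemma myPoly_map (f : R →+* S) (M : Matrix (Fin p) (Fin p) R) :
    f (myPoly M) = myPoly (M.map f) := by
  have haev : ((Polynomial.aeval M M.charpolyRev)).map f
      = Polynomial.aeval (M.map f) ((M.charpolyRev).map f) := by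
    rw [← RingHom.mapMatrix_apply]
    have hcomp : (f.mapMatrix).comp (algebraMap R (Matrix (Fin p) (Fin p) R))
        = (algebraMap S (Matrix (Fin p) (Fin p) S)).comp f := by
      refine RingHom.ext fun r => ?_
      ext i j
      simp [Matrix.algebraMap_matrix_apply, apply_ite f]
    rw [Polynomial.aeval_def, Polynomial.aeval_def, Polynomial.hom_eval₂, Polynomial.eval₂_map,
      hcomp, RingHom.mapMatrix_apply]
  have h2 : f (myPoly M) = (((Polynomial.aeval M M.charpolyRev)).map f).det := by
    rw [myPoly, RingHom.map_det, RingHom.mapMatrix_apply]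
  rw [h2, haev, charpolyRev_map', myPoly]

lemma eval_charpoly' (M : Matrix (Fin p) (Fin p) R) (a : R) :
    M.charpoly.eval a = (a • (1 : Matrix (Fin p) (Fin p) R) - M).det := by
  rw [Matrix.charpoly, ← Polynomial.coe_evalRingHom, RingHom.map_det]
  congr 1
  ext i j
  rcases eq_or_ne i j with h | h
  · subst h
    simp [Matrix.charmatrix_apply_eq, Matrix.one_apply, RingHom.mapMatrix_apply, Matrix.map_apply]
  · simp [Matrix.charmatrix_apply_ne _ _ _ h, Matrix.one_apply, h, RingHom.mapMatrix_apply,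
      Matrix.map_apply]

lemma eval_charpolyRev' (M : Matrix (Fin p) (Fin p) R) (a : R) :
    M.charpolyRev.eval a = ((1 : Matrix (Fin p) (Fin p) R) - a • M).det := by
  rw [Matrix.charpolyRev, ← Polynomial.coe_evalRingHom, RingHom.map_det]
  congr 1
  ext i j
  rcases eq_or_ne i j with h | h
  · subst h
    simp [Matrix.one_apply, smul_eq_mul, RingHom.mapMatrix_apply, Matrix.map_apply]
    try ring
  · simp [Matrix.one_apply, smul_eq_mul, h, RingHom.mapMatrix_apply, Matrix.map_apply]
    try ring

lemma charpolyRev_ne_zero (M : Matrix (Fin p) (Fin p) R) [Nontrivial R] :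
    M.charpolyRev ≠ 0 := by
  intro h
  have := Matrix.eval_charpolyRev (M := M)
  rw [h] at this
  simp at this

lemma det_aeval_multiset_prod (M : Matrix (Fin p) (Fin p) ℂ) (s : Multiset (Polynomial ℂ)) :
    ((Polynomial.aeval M) s.prod).det = (s.map fun q => ((Polynomial.aeval M) q).det).prod := by
  induction s using Multiset.induction_on with
  | empty => simp
  | cons q s ih => simp [Multiset.prod_cons, _root_.map_mul, det_mul, ih]

lemma myPoly_eq_prod (M : Matrix (Fin p) (Fin p) ℂ) :
    myPoly M = M.charpolyRev.leadingCoeff ^ p *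
      ((M.charpolyRev.roots.map fun a => (M - a • 1).det).prod) := by
  have hfact := (IsAlgClosed.splits M.charpolyRev).eq_prod_roots
  unfold myPoly
  conv_lhs => rw [hfact]
  rw [_root_.map_mul, Polynomial.aeval_C, det_mul]
  congr 1
  · rw [Algebra.algebraMap_eq_smul_one, det_smul, det_one, mul_one, Fintype.card_fin]
  · rw [det_aeval_multiset_prod, Multiset.map_map]
    congr 1
    apply Multiset.map_congr rfl
    intro a _
    simp [Algebra.algebraMap_eq_smul_one]

lemma conj_root_of_real (D : Matrix (Fin p) (Fin p) ℝ) {lam : ℂ}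
    (h : ((D.map (algebraMap ℝ ℂ)).charpoly).IsRoot lam) :
    ((D.map (algebraMap ℝ ℂ)).charpoly).IsRoot ((starRingEnd ℂ) lam) := by
  have hcm : (D.map (algebraMap ℝ ℂ)).charpoly = D.charpoly.map (algebraMap ℝ ℂ) :=
    Matrix.charpoly_map D (algebraMap ℝ ℂ)
  have hcomp : (starRingEnd ℂ).comp (algebraMap ℝ ℂ) = algebraMap ℝ ℂ := by
    refine RingHom.ext fun x => ?_
    simpa using Complex.conj_ofReal x
  have key := Polynomial.hom_eval₂ D.charpoly (algebraMap ℝ ℂ) (starRingEnd ℂ) lam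
  rw [hcomp] at key
  rw [IsRoot, hcm, eval_map] at h ⊢
  rw [← key, h, map_zero]

lemma myPoly_eq_zero (D : Matrix (Fin p) (Fin p) ℝ) {lam : ℂ}
    (h1 : ‖lam‖ = 1)
    (h2 : ((D.map (algebraMap ℝ ℂ)).charpoly).IsRoot lam) :
    myPoly (D.map (algebraMap ℝ ℂ)) = 0 := by
  set M := D.map (algebraMap ℝ ℂ) with hM
  have hconj := conj_root_of_real D h2
  have hmul : lam * (starRingEnd ℂ) lam = 1 := by
    rw [Complex.mul_conj]
    norm_cast
    rw [Complex.normSq_eq_norm_sq, h1, one_pow]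
  have hrev : M.charpolyRev.IsRoot lam := by
    rw [IsRoot, eval_charpolyRev']
    have hsm : (1 : Matrix (Fin p) (Fin p) ℂ) - lam • M
        = lam • (((starRingEnd ℂ) lam) • (1 : Matrix (Fin p) (Fin p) ℂ) - M) := by
      rw [smul_sub, smul_smul, hmul, one_smul]
    rw [hsm, det_smul, ← eval_charpoly', hconj.eq_zero, mul_zero]
  have hmem : lam ∈ M.charpolyRev.roots :=
    Polynomial.mem_roots'.2 ⟨charpolyRev_ne_zero M, hrev⟩
  rw [myPoly_eq_prod]
  have hdet : (M - lam • 1).det = 0 := by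
    have : M - lam • 1 = -(lam • 1 - M) := (neg_sub _ _).symm
    rw [this, Matrix.det_neg, ← eval_charpoly', h2.eq_zero, mul_zero]
  have : (0 : ℂ) ∈ M.charpolyRev.roots.map fun a => (M - a • 1).det :=
    Multiset.mem_map.2 ⟨lam, hmem, hdet⟩
  rw [Multiset.prod_eq_zero this, mul_zero]

lemma myPoly_ne_zero (D : Matrix (Fin p) (Fin p) ℝ) (h : SpecRadiusLtOne D) :
    myPoly (D.map (algebraMap ℝ ℂ)) ≠ 0 := by
  set M := D.map (algebraMap ℝ ℂ) with hM
  rw [myPoly_eq_prod]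
  refine mul_ne_zero (pow_ne_zero _ (Polynomial.leadingCoeff_ne_zero.2 (charpolyRev_ne_zero M)))
    (Multiset.prod_ne_zero ?_)
  intro h0
  obtain ⟨a, ha, hdet⟩ := Multiset.mem_map.1 h0
  have hroot : M.charpolyRev.IsRoot a := (Polynomial.mem_roots'.1 ha).2
  have ha0 : a ≠ 0 := by
    intro h'
    have := hroot.eq_zero
    rw [h'] at this
    rw [Matrix.eval_charpolyRev] at this
    exact one_ne_zero this
  -- a⁻¹ is a root of charpoly
  have hinv : M.charpoly.IsRoot a⁻¹ := by
    rw [IsRoot, eval_charpoly']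
    have : a⁻¹ • (1 : Matrix (Fin p) (Fin p) ℂ) - M = a⁻¹ • ((1 : Matrix (Fin p) (Fin p) ℂ) - a • M) := by
      rw [smul_sub, smul_smul, inv_mul_cancel₀ ha0, one_smul]
    rw [this, det_smul, ← eval_charpolyRev', hroot.eq_zero, mul_zero]
  have h1 : ‖a⁻¹‖ < 1 := h a⁻¹ hinv
  -- a is a root of charpoly
  have haroot : M.charpoly.IsRoot a := by
    rw [IsRoot, eval_charpoly']
    have : a • (1 : Matrix (Fin p) (Fin p) ℂ) - M = -(M - a • 1) := (neg_sub _ _).symm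
    rw [this, Matrix.det_neg, hdet, mul_zero]
  have h2 : ‖a‖ < 1 := h a haroot
  have hpos : 0 < ‖a‖ := norm_pos_iff.mpr ha0
  rw [norm_inv] at h1
  nlinarith [mul_pos (sub_pos.2 h2) (inv_pos.2 hpos), mul_inv_cancel₀ (ne_of_gt hpos)]

open MvPolynomial in
lemma continuous_mv_eval {σ : Type*} (P : MvPolynomial σ ℝ) :
    Continuous fun x : σ → ℝ => MvPolynomial.eval x P := by
  induction P using MvPolynomial.induction_on with
  | C a => simpa using continuous_const
  | add p q hp hq => simpa [Pi.add_def] using hp.add hq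
  | mul_X q i hq => simpa [Pi.mul_def] using hq.mul (continuous_apply i)

lemma mv_null : ∀ (n : ℕ) (P : MvPolynomial (Fin n) ℝ), P ≠ 0 →
    volume {x : Fin n → ℝ | MvPolynomial.eval x P = 0} = 0 := by
  intro n
  induction n with
  | zero =>
    intro P hP
    obtain ⟨c, rfl⟩ := MvPolynomial.C_surjective (Fin 0) P
    have hc : c ≠ 0 := fun h => hP (by rw [h, map_zero])
    convert measure_empty (μ := (volume : Measure (Fin 0 → ℝ)))
    ext x
    simp [hc]
  | succ n IH =>
    intro P hP
    set q := MvPolynomial.finSuccEquiv ℝ n P with hq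
    have hq0 : q ≠ 0 := by
      intro h
      apply hP
      have := (MvPolynomial.finSuccEquiv ℝ n).injective (a₁ := P) (a₂ := 0)
      simp only [map_zero] at this
      exact this h
    obtain ⟨k, hk⟩ : ∃ k, q.coeff k ≠ 0 := by
      by_contra hcon
      push_neg at hcon
      exact hq0 (Polynomial.ext fun m => by simp [hcon m])
    -- the swapped product space
    set T : Set ((Fin n → ℝ) × ℝ) :=
      {ty | MvPolynomial.eval (Fin.cons ty.2 ty.1) P = 0} with hT
    have hcons : Continuous fun ty : (Fin n → ℝ) × ℝ => (Fin.cons ty.2 ty.1 : Fin (n+1) → ℝ) := by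
      apply continuous_pi
      intro i
      refine Fin.cases ?_ ?_ i
      · simpa using continuous_snd
      · intro j
        simpa [Function.comp_def] using (continuous_apply j).comp continuous_fst
    have hTm : MeasurableSet T := by
      have hc : Continuous fun ty : (Fin n → ℝ) × ℝ => MvPolynomial.eval (Fin.cons ty.2 ty.1) P :=
        (continuous_mv_eval P).comp hcons
      exact hc.measurable (measurableSet_singleton 0)
    have hmp : MeasurePreserving
        (fun x : Fin (n+1) → ℝ => ((fun i => x (Fin.succAbove 0 i), x 0) : (Fin n → ℝ) × ℝ))
        volume ((volume : Measure (Fin n → ℝ)).prod (volume : Measure ℝ)) := by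
      have h1 := volume_preserving_piFinSuccAbove (fun _ : Fin (n+1) => ℝ) 0
      have h2 := MeasureTheory.Measure.measurePreserving_swap
        (μ := (volume : Measure ℝ)) (ν := (volume : Measure (Fin n → ℝ)))
      exact h2.comp h1
    have hpre : {x : Fin (n+1) → ℝ | MvPolynomial.eval x P = 0}
        = (fun x : Fin (n+1) → ℝ => ((fun i => x (Fin.succAbove 0 i), x 0) : (Fin n → ℝ) × ℝ)) ⁻¹' T := by
      ext x
      simp only [Set.mem_setOf_eq, Set.mem_preimage, hT]
      have : (Fin.cons (x 0) (fun i => x (Fin.succAbove 0 i)) : Fin (n+1) → ℝ) = x := by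
        simp only [Fin.succAbove_zero]
        exact Fin.cons_self_tail x
      rw [this]
    rw [hpre, hmp.measure_preimage hTm.nullMeasurableSet]
    rw [MeasureTheory.Measure.measure_prod_null hTm]
    have hN : volume {t : Fin n → ℝ | MvPolynomial.eval t (q.coeff k) = 0} = 0 := IH _ hk
    have hae : ∀ᵐ t : Fin n → ℝ, MvPolynomial.eval t (q.coeff k) ≠ 0 := by
      rw [ae_iff]
      simpa using hN
    filter_upwards [hae] with t ht
    have hqt : q.map (MvPolynomial.eval t) ≠ 0 := by
      intro h
      apply ht
      have := congrArg (fun r => r.coeff k) h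
      simpa [Polynomial.coeff_map] using this
    have hsec : Prod.mk t ⁻¹' T = {y : ℝ | (q.map (MvPolynomial.eval t)).IsRoot y} := by
      ext y
      simp only [Set.mem_preimage, Set.mem_setOf_eq, hT, Polynomial.IsRoot]
      rw [MvPolynomial.eval_eq_eval_mv_eval']
    show volume (Prod.mk t ⁻¹' T) = 0
    rw [hsec]
    exact (Polynomial.finite_setOf_isRoot hqt).measure_zero volume

lemma mv_null_curry {r p : ℕ} (P : MvPolynomial (Fin r × Fin p) ℝ) (hP : P ≠ 0) :
    volume {L : Fin r → Fin p → ℝ | MvPolynomial.eval (fun ij => L ij.1 ij.2) P = 0} = 0 := by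
  classical
  set e : Fin r × Fin p ≃ Fin (r * p) := finProdFinEquiv with he
  set F : (Fin r → Fin p → ℝ) → (Fin (r * p) → ℝ) :=
    fun L m => L (e.symm m).1 (e.symm m).2 with hF
  have hFmeas : Measurable F :=
    measurable_pi_lambda _ fun m => (measurable_pi_apply _).comp (measurable_pi_apply _)
  have hMP : MeasurePreserving F volume volume := by
    refine ⟨hFmeas, ?_⟩
    rw [show (volume : Measure (Fin (r*p) → ℝ)) = Measure.pi (fun _ => volume) from
      MeasureTheory.volume_pi]
    refine (Measure.pi_eq fun s hs => ?_).symm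
    rw [Measure.map_apply hFmeas (MeasurableSet.univ_pi hs)]
    have hpre : F ⁻¹' (Set.pi Set.univ s)
        = Set.pi Set.univ (fun i => Set.pi Set.univ fun j => s (e (i, j))) := by
      ext L
      simp only [Set.mem_preimage, Set.mem_univ_pi, hF]
      constructor
      · intro h i j
        simpa [e.symm_apply_apply] using h (e (i, j))
      · intro h m
        have := h (e.symm m).1 (e.symm m).2
        simpa [e.apply_symm_apply] using this
    rw [hpre, volume_pi_pi]
    simp_rw [volume_pi_pi]
    rw [← Equiv.prod_comp e (fun m => volume (s m)), Fintype.prod_prod_type]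
  set Q := MvPolynomial.rename (⇑e) P with hQ
  have hQ0 : Q ≠ 0 := by
    intro h
    apply hP
    have := MvPolynomial.rename_injective (⇑e) e.injective (a₁ := P) (a₂ := 0)
    simp only [map_zero] at this
    exact this h
  have hZ : volume {x : Fin (r * p) → ℝ | MvPolynomial.eval x Q = 0} = 0 := mv_null _ Q hQ0
  have hZm : MeasurableSet {x : Fin (r * p) → ℝ | MvPolynomial.eval x Q = 0} :=
    (continuous_mv_eval Q).measurable (measurableSet_singleton 0)
  have hsub : {L : Fin r → Fin p → ℝ | MvPolynomial.eval (fun ij => L ij.1 ij.2) P = 0}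
      = F ⁻¹' {x : Fin (r * p) → ℝ | MvPolynomial.eval x Q = 0} := by
    ext L
    simp only [Set.mem_preimage, Set.mem_setOf_eq, hQ, MvPolynomial.eval_rename]
    have : (F L) ∘ ⇑e = fun ij : Fin r × Fin p => L ij.1 ij.2 := by
      funext ij
      simp [hF, e.symm_apply_apply]
    rw [this]
  rw [hsub, hMP.measure_preimage hZm.nullMeasurableSet, hZ]

end Aux

/-- for a stabilizable pair `[A₀, B₀]`, the set of feedback matrices `L` for
which `A₀ + B₀L` has an eigenvalue on the unit circle is Lebesgue-null. -/
theorem unit_eigenvalue_set_null {p r : ℕ}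
    (A₀ : Matrix (Fin p) (Fin p) ℝ) (B₀ : Matrix (Fin p) (Fin r) ℝ)
    (hstab : Stabilizable A₀ B₀) :
    volume {L : Fin r → Fin p → ℝ | ∃ lam : ℂ, ‖lam‖ = 1 ∧
      (((A₀ + B₀ * Matrix.of L).map (algebraMap ℝ ℂ)).charpoly).IsRoot lam} = 0 := by
  classical
  obtain ⟨L₀, hL₀⟩ := hstab
  set N : Matrix (Fin p) (Fin p) (MvPolynomial (Fin r × Fin p) ℝ) :=
    A₀.map MvPolynomial.C + B₀.map MvPolynomial.C * Matrix.of (fun i j => MvPolynomial.X (i, j))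
    with hN
  have hNmap : ∀ L : Fin r → Fin p → ℝ,
      N.map (MvPolynomial.eval fun ij : Fin r × Fin p => L ij.1 ij.2) = A₀ + B₀ * Matrix.of L := by
    intro L
    ext i j
    simp [hN, Matrix.map_apply, Matrix.add_apply, Matrix.mul_apply, map_sum]
    erw [Matrix.mul_apply, map_sum]
    simp
  have hkey : ∀ L : Fin r → Fin p → ℝ,
      MvPolynomial.eval (fun ij : Fin r × Fin p => L ij.1 ij.2) (myPoly N)
        = myPoly (A₀ + B₀ * Matrix.of L) := by
    intro L
    rw [show (MvPolynomial.eval (fun ij : Fin r × Fin p => L ij.1 ij.2)) (myPoly N)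
      = myPoly (N.map (MvPolynomial.eval fun ij : Fin r × Fin p => L ij.1 ij.2)) from
        myPoly_map _ N, hNmap L]
  have hofL₀ : Matrix.of (fun i j => L₀ i j) = L₀ := rfl
  have hΦ : myPoly N ≠ 0 := by
    intro h
    have h0 : myPoly (A₀ + B₀ * L₀) = 0 := by
      have := hkey (fun i j => L₀ i j)
      rw [h, map_zero, hofL₀] at this
      exact this.symm
    apply myPoly_ne_zero (A₀ + B₀ * L₀) hL₀
    rw [← myPoly_map (algebraMap ℝ ℂ), h0, map_zero]
  refine measure_mono_null ?_ (mv_null_curry (myPoly N) hΦ)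
  intro L hL
  obtain ⟨lam, habs, hroot⟩ := hL
  show MvPolynomial.eval (fun ij : Fin r × Fin p => L ij.1 ij.2) (myPoly N) = 0
  rw [hkey]
  have h2 : algebraMap ℝ ℂ (myPoly (A₀ + B₀ * Matrix.of L)) = 0 := by
    rw [myPoly_map (algebraMap ℝ ℂ)]
    exact myPoly_eq_zero (A₀ + B₀ * Matrix.of L) habs hroot
  exact (algebraMap ℝ ℂ).injective (by rw [h2, map_zero])
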